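/- arXiv:1404.3998 — 3 statements merged into one kernel-verified Lean document; each statement's English description precedes it below -/
import Mathlib

section
/- Let V be a finite-dimensional vector space of dimension r over a commutative ring, and let f be an endomorphism of V. Then Σ_{i=0}^{r} (-1)^i f^i ∘ c_{r-i} = 0, where c_j denotes multiplication by the trace of the induced endomorphism Λ^j(f) of the j-th exterior power of V; i.e., f satisfies its characteristic polynomial whose coefficients are (−1)^j tr(Λ^j f). (Cayley–Hamilton expressed via exterior powers.) -/
open ExteriorAlgebra

lemma exteriorPower_map_le (R M : Type*) [CommRing R] [AddCommGroup M] [Module R M]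
    (j : ℕ) (f : M →ₗ[R] M) :
    Submodule.map (ExteriorAlgebra.map f).toLinearMap
        (LinearMap.range (ι R (M := M)) ^ j) ≤ LinearMap.range (ι R (M := M)) ^ j := by
  rw [Submodule.map_pow]
  have h2 : Submodule.map (ExteriorAlgebra.map f).toLinearMap
      (LinearMap.range (ι R (M := M))) ≤ LinearMap.range (ι R (M := M)) := by
    rw [ExteriorAlgebra.ι_range_map_map]
    exact LinearMap.map_le_range
  induction j with
  | zero => simp
  | succ m ih =>
      rw [pow_succ, pow_succ]
      exact mul_le_mul' ih h2

/-- The endomorphism `Λ^j f` induced by `f : M →ₗ[R] M` on the `j`-th exterior power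
`⋀[R]^j M`. -/
noncomputable def exteriorPowerMap (R M : Type*) [CommRing R] [AddCommGroup M] [Module R M]
    (j : ℕ) (f : M →ₗ[R] M) : ⋀[R]^j M →ₗ[R] ⋀[R]^j M :=
  (ExteriorAlgebra.map f).toLinearMap.restrict (p := ⋀[R]^j M) (q := ⋀[R]^j M)
    (fun x hx => exteriorPower_map_le R M j f (Submodule.mem_map_of_mem hx))

open Polynomial

section CHAux

variable {R M : Type*} [CommRing R] [AddCommGroup M] [Module R M] {r : ℕ}
  (b : Module.Basis (Fin r) R M)

namespace CHAux

/-- The exterior monomial associated to a finset of basis indices. -/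
noncomputable def el (n : ℕ) (s : Finset (Fin r)) (hs : s.card = n) : ExteriorAlgebra R M :=
  ιMulti R n fun i => b (s.orderIsoOfFin hs i)

/-- The coordinate alternating form associated to a finset of basis indices. -/
noncomputable def coordForm (n : ℕ) (s : Finset (Fin r)) (hs : s.card = n) :
    M [⋀^Fin n]→ₗ[R] R :=
  (Matrix.detRowAlternating).compLinearMap
    (LinearMap.pi fun k => b.coord (s.orderIsoOfFin hs k))

/-- The coordinate functional on the exterior algebra. -/
noncomputable def phi (n : ℕ) (s : Finset (Fin r)) (hs : s.card = n) :
    ExteriorAlgebra R M →ₗ[R] R :=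
  liftAlternating (Function.update (fun _ => 0) n (coordForm b n s hs))

lemma phi_ιMulti (n : ℕ) (s : Finset (Fin r)) (hs : s.card = n) (v : Fin n → M) :
    phi b n s hs (ιMulti R n v) =
      Matrix.det (Matrix.of fun i k => b.repr (v i) (s.orderIsoOfFin hs k)) := by
  rw [phi, liftAlternating_apply_ιMulti, Function.update_self]
  rfl

lemma phi_el (n : ℕ) (s t : Finset (Fin r)) (hs : s.card = n) (ht : t.card = n) :
    phi b n s hs (el b n t ht) = if s = t then 1 else 0 := by
  rw [el, phi_ιMulti]
  split_ifs with h
  · subst h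
    have h1 : (Matrix.of fun i k =>
        (b.repr (b ((s.orderIsoOfFin hs) i))) ((s.orderIsoOfFin hs) k))
        = (1 : Matrix (Fin n) (Fin n) R) := by
      ext i k
      rw [Matrix.of_apply, Module.Basis.repr_self_apply, Matrix.one_apply]
      by_cases hik : i = k
      · simp [hik]
      · have : ((s.orderIsoOfFin hs) i : Fin r) ≠ ((s.orderIsoOfFin hs) k : Fin r) := by
          simp only [ne_eq, Subtype.coe_inj]
          exact fun hc => hik ((s.orderIsoOfFin hs).injective hc)
        simp [hik, this]
    rw [h1, Matrix.det_one]
  · obtain ⟨x, hxt, hxs⟩ : ∃ x, x ∈ t ∧ x ∉ s := by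
      by_contra h'
      push_neg at h'
      exact h (Finset.eq_of_subset_of_card_le h' (by rw [hs, ht])).symm
    apply Matrix.det_eq_zero_of_row_eq_zero ((t.orderIsoOfFin ht).symm ⟨x, hxt⟩)
    intro k
    rw [Matrix.of_apply, OrderIso.apply_symm_apply, Module.Basis.repr_self_apply]
    have hne : x ≠ ((s.orderIsoOfFin hs) k : Fin r) := by
      intro hc
      exact hxs (hc ▸ ((s.orderIsoOfFin hs) k).2)
    simp only [Finset.coe_orderIsoOfFin_apply] at hne ⊢
    simp [hne]

lemma mem_span_el {n : ℕ} {x : ExteriorAlgebra R M} (hx : x ∈ ⋀[R]^n M) :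
    x ∈ Submodule.span R
      (Set.range fun s : {s : Finset (Fin r) // s.card = n} => el b n s.1 s.2) := by
  classical
  rw [← ιMulti_span_fixedDegree] at hx
  refine Submodule.span_le.mpr ?_ hx
  rintro _ ⟨v, rfl⟩
  have hv : ιMulti R n v =
      ∑ d : Fin n → Fin r, (∏ i, b.repr (v i) (d i)) • ιMulti R n fun i => b (d i) := by
    calc ιMulti R n v = ιMulti R n (fun i => ∑ k, b.repr (v i) k • b k) := by
          congr 1
          funext i
          exact (b.sum_repr (v i)).symm
      _ = ∑ d : Fin n → Fin r, ιMulti R n (fun i => b.repr (v i) (d i) • b (d i)) :=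
          ((ιMulti R n).toMultilinearMap).map_sum (fun i k => b.repr (v i) k • b k)
      _ = _ := by
          refine Finset.sum_congr rfl fun d _ => ?_
          exact ((ιMulti R n).toMultilinearMap).map_smul_univ _ _
  rw [hv]
  refine Submodule.sum_mem _ fun d _ => Submodule.smul_mem _ _ ?_
  by_cases hd : Function.Injective d
  · set t : Finset (Fin r) := Finset.image d Finset.univ with htdef
    have ht : t.card = n := by
      rw [htdef, Finset.card_image_of_injective _ hd, Finset.card_univ, Fintype.card_fin]
    have hmem : ∀ y, y ∈ Set.range d ↔ y ∈ t := by
      intro y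
      simp [htdef]
    set σ : Equiv.Perm (Fin n) :=
      ((Equiv.ofInjective d hd).trans ((Equiv.subtypeEquivRight hmem).trans
        (t.orderIsoOfFin ht).toEquiv.symm)) with hσ
    have hkey : ∀ i, ((t.orderIsoOfFin ht) (σ i) : Fin r) = d i := by
      intro i
      rw [hσ]
      simp only [Equiv.trans_apply, Equiv.subtypeEquivRight_apply, OrderIso.toEquiv_symm,
        Equiv.ofInjective_apply]
      simp
    have hfun : (fun i => b (d i)) = (fun i => b ((t.orderIsoOfFin ht) i)) ∘ σ := by
      funext i
      simp only [Function.comp_apply, hkey i]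
    rw [hfun, AlternatingMap.map_perm]
    rw [Units.smul_def, ← Int.cast_smul_eq_zsmul R]
    exact Submodule.smul_mem _ _ (Submodule.subset_span ⟨⟨t, ht⟩, rfl⟩)
  · obtain ⟨i, j, hij, hne⟩ : ∃ i j, d i = d j ∧ i ≠ j := by
      simpa [Function.Injective] using hd
    have h0 : (ιMulti R n) (fun k => b (d k)) = 0 :=
      AlternatingMap.map_eq_zero_of_eq (ιMulti R n) (v := fun k => b (d k)) (i := i) (j := j)
        (by simp only [hij]) hne
    rw [h0]
    exact Submodule.zero_mem _

/-- The exterior monomials as elements of the exterior power submodule. -/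
noncomputable def elP (n : ℕ) (s : {s : Finset (Fin r) // s.card = n}) : ⋀[R]^n M :=
  ⟨el b n s.1 s.2, ιMulti_range R n (Set.mem_range_self _)⟩

lemma elP_li (n : ℕ) : LinearIndependent R (elP b n) := by
    rw [linearIndependent_iff']
    intro S g hg t htS
    have h0 : ((∑ s ∈ S, g s • elP b n s : ⋀[R]^n M) : ExteriorAlgebra R M) = 0 := by
      rw [hg]; rfl
    have h1 : ∑ s ∈ S, g s • el b n s.1 s.2 = 0 := by
      rw [← h0]
      simp [elP]
    have h2 := congrArg (phi b n t.1 t.2) h1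
    rw [map_sum, map_zero] at h2
    rw [← h2]
    rw [Finset.sum_eq_single_of_mem t htS]
    · rw [map_smul, phi_el, if_pos rfl, smul_eq_mul, mul_one]
    · intro s _ hst
      rw [map_smul, phi_el, if_neg (fun hc => hst (Subtype.ext hc.symm)), smul_eq_mul, mul_zero]

lemma elP_span (n : ℕ) : ⊤ ≤ Submodule.span R (Set.range (elP b n)) := by
    intro x _
    have hx := mem_span_el b x.2
    have hmap : Submodule.map (⋀[R]^n M).subtype (Submodule.span R (Set.range (elP b n)))
        = Submodule.span R (Set.range fun s : {s : Finset (Fin r) // s.card = n} =>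
            el b n s.1 s.2) := by
      rw [Submodule.map_span]
      congr 1
      rw [← Set.range_comp]
      rfl
    rw [← hmap] at hx
    obtain ⟨y, hy, hyx⟩ := hx
    have : y = x := Subtype.ext hyx
    exact this ▸ hy

/-- The basis of the `n`-th exterior power given by a basis of `M`. -/
noncomputable def basisExt (n : ℕ) : Module.Basis {s : Finset (Fin r) // s.card = n} R (⋀[R]^n M) :=
  Module.Basis.mk (elP_li b n) (elP_span b n)

@[simp] lemma basisExt_apply (n : ℕ) (s : {s : Finset (Fin r) // s.card = n}) :
    basisExt b n s = elP b n s :=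
  Module.Basis.mk_apply _ _ _

lemma basisExt_repr (n : ℕ) (x : ⋀[R]^n M) (t : {s : Finset (Fin r) // s.card = n}) :
    (basisExt b n).repr x t = phi b n t.1 t.2 x := by
  have hx : (x : ExteriorAlgebra R M) =
      ∑ s : {s : Finset (Fin r) // s.card = n},
        (basisExt b n).repr x s • el b n s.1 s.2 := by
    conv_lhs => rw [← (basisExt b n).sum_repr x]
    rw [Submodule.coe_sum]
    exact Finset.sum_congr rfl fun s _ => by rw [basisExt_apply]; rfl
  have h2 := congrArg (phi b n t.1 t.2) hx
  rw [map_sum] at h2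
  rw [Finset.sum_eq_single_of_mem t (Finset.mem_univ t) (fun s _ hst => by
    rw [map_smul, phi_el, if_neg (fun hc => hst (Subtype.ext hc.symm)), smul_eq_mul,
      mul_zero])] at h2
  rw [map_smul, phi_el, if_pos rfl, smul_eq_mul, mul_one] at h2
  exact h2.symm

lemma trace_exteriorPowerMap (n : ℕ) (f : Module.End R M) :
    LinearMap.trace R (⋀[R]^n M) (exteriorPowerMap R M n f) =
      ∑ s : {s : Finset (Fin r) // s.card = n},
        ((LinearMap.toMatrix b b f).submatrix
          (fun i => ((s.1.orderIsoOfFin s.2) i : Fin r))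
          (fun i => ((s.1.orderIsoOfFin s.2) i : Fin r))).det := by
  classical
  rw [LinearMap.trace_eq_matrix_trace R (basisExt b n), Matrix.trace]
  refine Finset.sum_congr rfl fun s _ => ?_
  rw [Matrix.diag_apply, LinearMap.toMatrix_apply, basisExt_repr]
  have h1 : ((exteriorPowerMap R M n f) ((basisExt b n) s) : ExteriorAlgebra R M)
      = ExteriorAlgebra.map f (el b n s.1 s.2) := by
    rw [basisExt_apply]
    rfl
  rw [h1, el, map_apply_ιMulti, phi_ιMulti]
  rw [← Matrix.det_transpose]
  congr 1
  ext i k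
  simp [LinearMap.toMatrix_apply, Function.comp]

end CHAux
end CHAux



lemma charpoly_eq_sum_minors {R : Type*} [CommRing R] {r : ℕ} (A : Matrix (Fin r) (Fin r) R) :
    A.charpoly = ∑ s : Finset (Fin r),
      Polynomial.C ((-1 : R) ^ s.card *
        (A.submatrix (Subtype.val : {x // x ∈ s} → Fin r) Subtype.val).det)
        * (Polynomial.X : R[X]) ^ (r - s.card) := by
  classical
  -- row decomposition
  set m : Fin r → Fin r → R[X] := fun i => (-((C : R →+* R[X]).mapMatrix A)) i with hm
  set m' : Fin r → Fin r → R[X] := fun i => (X : R[X]) • (1 : Matrix (Fin r) (Fin r) R[X]) i with hm'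
  have hsplit : (Matrix.charmatrix A : Fin r → Fin r → R[X]) = m + m' := by
    funext i j
    by_cases hij : i = j
    · subst hij
      simp [m, m', Matrix.charmatrix_apply_eq, Matrix.one_apply, sub_eq_neg_add]
    · simp [m, m', Matrix.charmatrix_apply_ne A _ _ hij, Matrix.one_apply, Ne.symm hij, hij]
  have hdet : A.charpoly =
      (Matrix.detRowAlternating : (Fin r → R[X]) [⋀^Fin r]→ₗ[R[X]] R[X]).toMultilinearMap
        (m + m') := by
    rw [Matrix.charpoly, ← hsplit]
    rfl
  rw [hdet, MultilinearMap.map_add_univ]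
  refine Finset.sum_congr rfl fun s _ => ?_
  set mm : Fin r → Fin r → R[X] := s.piecewise m ((1 : Matrix (Fin r) (Fin r) R[X]) ·) with hmm
  have hpw : s.piecewise m m' = sᶜ.piecewise (fun i => (X : R[X]) • mm i) mm := by
    funext i
    by_cases hi : i ∈ s
    · rw [Finset.piecewise_eq_of_mem _ _ _ hi,
        Finset.piecewise_eq_of_notMem _ _ _ (by simpa using hi), hmm,
        Finset.piecewise_eq_of_mem _ _ _ hi]
    · rw [Finset.piecewise_eq_of_notMem _ _ _ hi,
        Finset.piecewise_eq_of_mem _ _ _ (by simpa using hi), hmm,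
        Finset.piecewise_eq_of_notMem _ _ _ hi, hm']
  rw [hpw, MultilinearMap.map_piecewise_smul, Finset.prod_const, Finset.card_compl,
    Fintype.card_fin]
  -- now the det of the 0/1 bordered matrix
  have hdet2 : (Matrix.detRowAlternating : (Fin r → R[X]) [⋀^Fin r]→ₗ[R[X]] R[X]).toMultilinearMap
      mm = (Matrix.of mm).det := rfl
  have h3 : (Matrix.of mm).det =
      C ((-1 : R) ^ s.card *
        (A.submatrix (Subtype.val : {x // x ∈ s} → Fin r) Subtype.val).det) := by
    rw [Matrix.twoBlockTriangular_det (Matrix.of mm) (· ∈ s) (fun i hi j hj => by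
      rw [Matrix.of_apply, hmm, Finset.piecewise_eq_of_notMem _ _ _ hi]
      exact Matrix.one_apply_ne (fun hc => hi (hc ▸ hj)))]
    have hb1 : (Matrix.of mm).toSquareBlockProp (· ∈ s) =
        -(((A.submatrix (Subtype.val : {x // x ∈ s} → Fin r) Subtype.val)).map C) := by
      refine Matrix.ext fun i j => ?_
      simp only [Matrix.toSquareBlockProp, Matrix.toBlock_apply, Matrix.submatrix_apply,
        Matrix.of_apply, Matrix.neg_apply, Matrix.map_apply]
      rw [hmm, Finset.piecewise_eq_of_mem _ _ _ i.2]
      rfl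
    have hb2 : (Matrix.of mm).toSquareBlockProp (fun i => ¬ i ∈ s) = 1 := by
      refine Matrix.ext fun i j => ?_
      simp only [Matrix.toSquareBlockProp, Matrix.toBlock_apply, Matrix.submatrix_apply,
        Matrix.of_apply]
      rw [hmm, Finset.piecewise_eq_of_notMem _ _ _ i.2]
      by_cases hij : i = j
      · subst hij; simp [Matrix.one_apply]
      · rw [Matrix.one_apply_ne (fun hc => hij (Subtype.ext hc)), Matrix.one_apply_ne hij]
    have hcard : ∀ (inst : Fintype {x // x ∈ s}), @Fintype.card _ inst = s.card := fun inst =>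
      ((@Fintype.card_eq {x // x ∈ s} {x // x ∈ s} inst (FinsetCoe.fintype s)).mpr
        ⟨Equiv.refl _⟩).trans (@Fintype.card_coe _ s (FinsetCoe.fintype s))
    rw [hb1, hb2]
    simp only [Matrix.det_one, mul_one, Matrix.det_neg, hcard]
    rw [RingHom.map_mul, RingHom.map_pow, map_neg, map_one, RingHom.map_det,
      RingHom.mapMatrix_apply]
    congr!
  rw [hdet2, h3, smul_eq_mul, mul_comm]


/-- **Cayley–Hamilton via exterior powers**: if `M` is free of rank `r` over a commutative
ring `R` and `f` an endomorphism of `M`, then `Σ_{i=0}^{r} (-1)^i tr(Λ^{r-i} f) • f^i = 0`,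
i.e. `f` satisfies its characteristic polynomial, whose coefficients are
`(−1)^j tr(Λ^j f)`. -/
theorem cayley_hamilton_exterior_powers (R M : Type*) [CommRing R] [AddCommGroup M]
    [Module R M] [Module.Free R M] [Module.Finite R M] (r : ℕ)
    (hr : Module.finrank R M = r) (f : Module.End R M) :
    ∑ i ∈ Finset.range (r + 1),
      ((-1 : R) ^ i * LinearMap.trace R (⋀[R]^(r - i) M) (exteriorPowerMap R M (r - i) f)) •
        (f ^ i) = 0 := by
  classical
  rcases subsingleton_or_nontrivial R with hR | hR
  · haveI := Module.subsingleton R M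
    exact Subsingleton.elim _ _
  let b : Module.Basis (Fin r) R M := (Module.finBasis R M).reindex (finCongr hr)
  set A : Matrix (Fin r) (Fin r) R := LinearMap.toMatrix b b f with hA
  have hch : Polynomial.aeval f A.charpoly = 0 := by
    rw [LinearMap.charpoly_toMatrix]
    exact LinearMap.aeval_self_charpoly f
  rw [charpoly_eq_sum_minors, map_sum] at hch
  have hch2 : ∑ s : Finset (Fin r),
      ((-1 : R) ^ s.card * (A.submatrix (Subtype.val : {x // x ∈ s} → Fin r) Subtype.val).det)
        • f ^ (r - s.card) = 0 := by
    rw [← hch]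
    refine Finset.sum_congr rfl fun s _ => ?_
    rw [map_mul, Polynomial.aeval_C, map_pow, Polynomial.aeval_X,
      Algebra.algebraMap_eq_smul_one, smul_mul_assoc, one_mul]
  have hfib : ∑ j ∈ Finset.range (r + 1), ∑ s ∈ Finset.univ.filter
        (fun s : Finset (Fin r) => s.card = j),
      ((-1 : R) ^ s.card * (A.submatrix (Subtype.val : {x // x ∈ s} → Fin r) Subtype.val).det)
        • f ^ (r - s.card) = 0 := by
    rw [Finset.sum_fiberwise_of_maps_to (fun s _ => Finset.mem_range_succ_iff.mpr
      (by simpa using Finset.card_le_univ s))]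
    exact hch2
  have htr : ∀ j, (∑ s ∈ Finset.univ.filter (fun s : Finset (Fin r) => s.card = j),
      (A.submatrix (Subtype.val : {x // x ∈ s} → Fin r) Subtype.val).det)
      = LinearMap.trace R (⋀[R]^j M) (exteriorPowerMap R M j f) := by
    intro j
    rw [CHAux.trace_exteriorPowerMap b j f, ← hA]
    rw [Finset.sum_subtype (p := fun s : Finset (Fin r) => s.card = j)
      (Finset.univ.filter _) (fun s => by simp) _]
    refine Finset.sum_congr rfl fun s _ => ?_
    rw [← Matrix.det_submatrix_equiv_self (s.1.orderIsoOfFin s.2).toEquiv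
      (A.submatrix Subtype.val Subtype.val), Matrix.submatrix_submatrix]
    rfl
  have hS : ∑ j ∈ Finset.range (r + 1),
      ((-1 : R) ^ j * LinearMap.trace R (⋀[R]^j M) (exteriorPowerMap R M j f)) • f ^ (r - j)
      = 0 := by
    rw [← hfib]
    refine Finset.sum_congr rfl fun j hj => ?_
    rw [← htr j, Finset.mul_sum, Finset.sum_smul]
    refine Finset.sum_congr rfl fun s hs => ?_
    rw [Finset.mem_filter] at hs
    rw [hs.2]
  calc ∑ i ∈ Finset.range (r + 1),
        ((-1 : R) ^ i * LinearMap.trace R (⋀[R]^(r - i) M) (exteriorPowerMap R M (r - i) f))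
          • f ^ i
      = ∑ j ∈ Finset.range (r + 1),
        ((-1 : R) ^ (r + 1 - 1 - j) * LinearMap.trace R (⋀[R]^(r - (r + 1 - 1 - j)) M)
          (exteriorPowerMap R M (r - (r + 1 - 1 - j)) f)) • f ^ (r + 1 - 1 - j) :=
        (Finset.sum_range_reflect (fun i =>
          ((-1 : R) ^ i * LinearMap.trace R (⋀[R]^(r - i) M)
            (exteriorPowerMap R M (r - i) f)) • f ^ i) (r + 1)).symm
    _ = ∑ j ∈ Finset.range (r + 1), ((-1 : R) ^ r) •
          (((-1 : R) ^ j * LinearMap.trace R (⋀[R]^j M) (exteriorPowerMap R M j f))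
            • f ^ (r - j)) := by
        refine Finset.sum_congr rfl fun j hj => ?_
        have hj' : j ≤ r := Finset.mem_range_succ_iff.mp hj
        have h1 : r + 1 - 1 - j = r - j := by omega
        have h2 : r - (r - j) = j := by omega
        rw [h1, h2, smul_smul, ← mul_assoc, ← pow_add,
          show r + j = (r - j) + 2 * j by omega, pow_add, pow_mul, neg_one_sq, one_pow, mul_one]
    _ = ((-1 : R) ^ r) • (0 : Module.End R M) := by rw [← Finset.smul_sum, hS]
    _ = 0 := smul_zero _
end

section
/- Let G be a group, Ĝ an affine algebraic group over a field E, and suppose given for every finite set I and every function f in the coordinate ring of the GIT double quotient Ĝ\(Ĝ^I)/Ĝ and every tuple (γ_i)_{i∈I} ∈ G^I an element S_{I,f,(γ_i)} of a commutative E-algebra B, satisfying: (i) f ↦ S_{I,f,(γ_i)} is an algebra homomorphism O(Ĝ\Ĝ^I/Ĝ) → B for each fixed I and (γ_i); (ii) for any map ζ : I → J, S_{J, f^ζ, (γ_j)} = S_{I, f, (γ_{ζ(i)})}, where f^ζ((g_j)_{j∈J}) = f((g_{ζ(i)})_{i∈I}); (iii) S_{I∪I∪I, f̃, (γ_i)×(γ'_i)×(γ''_i)}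 = S_{I, f, (γ_i (γ'_i)^{-1} γ''_i)}, where f̃((g_i)×(g'_i)×(g''_i)) = f((g_i (g'_i)^{-1} g''_i)). Then for any character ν : B → E and any n, the assignment f ↦ ν(S_{\{0,…,n\}, f∘β^{-1}, (1, γ_1, …, γ_n)}) defines a compatible family of E-points of the GIT quotients (Ĝ^n)//Ĝ (conjugation), functorial in maps {1,…,m} → {1,…,n} and compatible with the multiplication maps (g_1,…,g_{n+1}) ↦ (g_1,…,g_n g_{n+1}). -/
open scoped BigOperators

/-- The general linear group `GL_N(k)`. -/
abbrev GLn (N : ℕ) (k : Type) [Field k] := Matrix.GeneralLinearGroup (Fin N) k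

variable {k : Type} [Field k] {N : ℕ}

/-- Zariski-closed subsets of the affine space of `ι`-tuples of `N × N` matrices:
zero loci of sets of polynomials in the matrix entries. -/
def IsZClosed {ι : Type} (S : Set (ι → Matrix (Fin N) (Fin N) k)) : Prop :=
  ∃ T : Set (MvPolynomial (ι × Fin N × Fin N) k),
    S = {x | ∀ p ∈ T, MvPolynomial.eval (fun v => x v.1 v.2.1 v.2.2) p = 0}

/-- Zariski-closed subsets of the affine space of `N × N` matrices. -/
def IsZClosed₁ (S : Set (Matrix (Fin N) (Fin N) k)) : Prop :=
  ∃ T : Set (MvPolynomial (Fin N × Fin N) k),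
    S = {A | ∀ p ∈ T, MvPolynomial.eval (fun v => A v.1 v.2) p = 0}

/-- The set of matrices underlying a subgroup of `GL_N(k)`. -/
def matSet (H : Subgroup (GLn N k)) : Set (Matrix (Fin N) (Fin N) k) :=
  (fun g : GLn N k => (g : Matrix (Fin N) (Fin N) k)) '' (H : Set (GLn N k))

/-- A subgroup of `GL_N(k)` is algebraic (Zariski-closed in `GL_N`) if its set of matrices is
the intersection of a Zariski-closed set with `GL_N`. -/
def IsAlgSubgroup (H : Subgroup (GLn N k)) : Prop :=
  ∃ Z, IsZClosed₁ Z ∧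
    matSet H = Z ∩ Set.range (fun g : GLn N k => (g : Matrix (Fin N) (Fin N) k))

/-- An element of `GL_N(k)` is unipotent if `g - 1` is nilpotent. -/
def IsUnipotent (g : GLn N k) : Prop :=
  IsNilpotent ((g : Matrix (Fin N) (Fin N) k) - 1)

/-- A (possibly disconnected) algebraic subgroup of `GL_N(k)` is reductive if, in
characteristic zero, it has no nontrivial normal algebraic unipotent subgroup. -/
def IsReductive (H : Subgroup (GLn N k)) : Prop :=
  IsAlgSubgroup H ∧
    ∀ U : Subgroup (GLn N k), IsAlgSubgroup U → U ≤ H → (U.subgroupOf H).Normal →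
      (∀ u ∈ U, IsUnipotent u) → U = ⊥

/-- `H` is the Zariski closure of the subset `S ⊆ GL_N(k)`: the smallest algebraic subgroup
containing `S`. -/
def IsZClosureOf (H : Subgroup (GLn N k)) (S : Set (GLn N k)) : Prop :=
  IsAlgSubgroup H ∧ S ⊆ (H : Set (GLn N k)) ∧
    ∀ H' : Subgroup (GLn N k), IsAlgSubgroup H' → S ⊆ (H' : Set (GLn N k)) → H ≤ H'

/-- Regular functions on `GL_N(k)^ι`: polynomials in the matrix entries and in the inverses of
the determinants. -/
def IsRegularFun {ι : Type} [Fintype ι] (f : (ι → GLn N k) → k) : Prop :=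
  ∃ (d : ℕ) (P : MvPolynomial (ι × Fin N × Fin N) k), ∀ g : ι → GLn N k,
    f g = MvPolynomial.eval
        (fun v => ((g v.1 : Matrix (Fin N) (Fin N) k)) v.2.1 v.2.2) P *
      ∏ i, (((g i : Matrix (Fin N) (Fin N) k)).det)⁻¹ ^ d

/-- Regular functions on `GL_N(k)`. -/
def IsRegularFun₁ (f : GLn N k → k) : Prop :=
  ∃ (d : ℕ) (P : MvPolynomial (Fin N × Fin N) k), ∀ g : GLn N k,
    f g = MvPolynomial.eval (fun v => ((g : Matrix (Fin N) (Fin N) k)) v.1 v.2) P *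
      (((g : Matrix (Fin N) (Fin N) k)).det)⁻¹ ^ d

/-- Invariance of a function on `G^ι` under simultaneous conjugation by `G`. -/
def ConjInvOn {ι : Type} (G : Subgroup (GLn N k)) (f : (ι → GLn N k) → k) : Prop :=
  ∀ h ∈ G, ∀ g : ι → GLn N k, (∀ i, g i ∈ G) → f (fun i => h * g i * h⁻¹) = f g

/-- Two `ι`-tuples have the same image in the GIT quotient `G^ι // G` (simultaneous
conjugation) iff all `G`-conjugation-invariant regular functions agree on them. -/
def SameGITPoint {ι : Type} [Fintype ι] (G : Subgroup (GLn N k)) (x y : ι → GLn N k) : Prop :=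
  ∀ f : (ι → GLn N k) → k, IsRegularFun f → ConjInvOn G f → f x = f y

/-- A tuple is semisimple if the Zariski closure of the subgroup it generates is reductive. -/
def IsSemisimpleTuple {ι : Type} (g : ι → GLn N k) : Prop :=
  ∃ H : Subgroup (GLn N k),
    IsZClosureOf H ((Subgroup.closure (Set.range g) : Subgroup (GLn N k)) : Set (GLn N k)) ∧
    IsReductive H

/-- A function in `O(Ĝ\Ĝ^I/Ĝ)`: regular on `G^I` and invariant under left and right
diagonal translation by `G`. -/
def BiInvRegOn {ι : Type} [Fintype ι] (G : Subgroup (GLn N k))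
    (f : (ι → GLn N k) → k) : Prop :=
  IsRegularFun f ∧ ∀ h ∈ G, ∀ h' ∈ G, ∀ g : ι → GLn N k, (∀ i, g i ∈ G) →
    f (fun i => h * g i * h') = f g

/-- A function in `O((Ĝ^n)//Ĝ)`: regular and invariant under simultaneous conjugation. -/
def ConjRegOn {ι : Type} [Fintype ι] (G : Subgroup (GLn N k))
    (f : (ι → GLn N k) → k) : Prop :=
  IsRegularFun f ∧ ConjInvOn G f

/-- The function `f ∘ β⁻¹` on `Ĝ^{n+1}` associated via the isomorphism
`β : (Ĝ^n)//Ĝ ≅ Ĝ\(Ĝ^{n+1})/Ĝ`, `(g_1,…,g_n) ↦ (1, g_1, …, g_n)`, to a conjugation-invariant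
function `f` on `Ĝ^n`. -/
def thetaArg {k : Type} [Field k] {N : ℕ} (n : ℕ) (f : (Fin n → GLn N k) → k) :
    (Fin (n + 1) → GLn N k) → k :=
  fun g => f (fun i => g i.succ * (g 0)⁻¹)

/-- The map `(x_1, …, x_{n+1}) ↦ (x_1, …, x_n x_{n+1})` multiplying the last two
coordinates. -/
def mulLast {M : Type} [Mul M] {n : ℕ} (f : Fin (n + 1) → M) : Fin n → M :=
  fun i => if (i : ℕ) + 1 < n then f i.castSucc else f i.castSucc * f (Fin.last n)
namespace ExcursionAux

open MvPolynomial Matrix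

variable {k : Type} [Field k] {N : ℕ}

/-- The determinant of the `a`-th matrix as a polynomial in the entries. -/
noncomputable def detP (ι : Type) (N : ℕ) (k : Type) [Field k] (a : ι) :
    MvPolynomial (ι × Fin N × Fin N) k :=
  (Matrix.of fun i j : Fin N => MvPolynomial.X (a, i, j)).det

/-- Shorthand for the evaluation at the entries of a tuple. -/
noncomputable abbrev ev {ι : Type} (g : ι → GLn N k) :
    MvPolynomial (ι × Fin N × Fin N) k →+* k :=
  (MvPolynomial.eval (fun v : ι × Fin N × Fin N =>
    ((g v.1 : Matrix (Fin N) (Fin N) k)) v.2.1 v.2.2))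

lemma detP_eval {ι : Type} (a : ι) (g : ι → GLn N k) :
    ev g (detP ι N k a) = ((g a : Matrix (Fin N) (Fin N) k)).det := by
  rw [detP, RingHom.map_det]
  congr 1
  ext i j
  simp

lemma det_ne_zero {g : GLn N k} : ((g : Matrix (Fin N) (Fin N) k)).det ≠ 0 := by
  have : IsUnit ((g : Matrix (Fin N) (Fin N) k)).det :=
    (Matrix.isUnit_iff_isUnit_det _).mp g.isUnit
  exact this.ne_zero

lemma prod_det_inv_mul {ι : Type} [Fintype ι] (g : ι → GLn N k) (e : ℕ) :
    (∏ a, ((g a : Matrix (Fin N) (Fin N) k)).det ^ e) *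
      (∏ a, (((g a : Matrix (Fin N) (Fin N) k)).det)⁻¹ ^ e) = 1 := by
  rw [← Finset.prod_mul_distrib]
  refine Finset.prod_eq_one fun a _ => ?_
  rw [← mul_pow, mul_inv_cancel₀ det_ne_zero, one_pow]

lemma ev_detP_pow {ι : Type} [Fintype ι] (g : ι → GLn N k) (e : ℕ) :
    ev g ((∏ a, detP ι N k a) ^ e)
      = ∏ a, ((g a : Matrix (Fin N) (Fin N) k)).det ^ e := by
  rw [map_pow, map_prod]
  simp_rw [detP_eval]
  rw [← Finset.prod_pow]

lemma prod_inv_pow_add {ι : Type} [Fintype ι] (g : ι → GLn N k) (d d' : ℕ) :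
    (∏ a, (((g a : Matrix (Fin N) (Fin N) k)).det)⁻¹ ^ (d + d'))
      = (∏ a, (((g a : Matrix (Fin N) (Fin N) k)).det)⁻¹ ^ d) *
        (∏ a, (((g a : Matrix (Fin N) (Fin N) k)).det)⁻¹ ^ d') := by
  simp_rw [pow_add]
  rw [Finset.prod_mul_distrib]

lemma reg_const {ι : Type} [Fintype ι] (c : k) :
    IsRegularFun (fun _ : ι → GLn N k => c) := by
  refine ⟨0, MvPolynomial.C c, fun g => ?_⟩
  simp

lemma reg_add {ι : Type} [Fintype ι] {f f' : (ι → GLn N k) → k}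
    (hf : IsRegularFun f) (hf' : IsRegularFun f') :
    IsRegularFun (fun g => f g + f' g) := by
  obtain ⟨d, P, hP⟩ := hf
  obtain ⟨d', P', hP'⟩ := hf'
  refine ⟨d + d', P * (∏ a, detP ι N k a) ^ d' + P' * (∏ a, detP ι N k a) ^ d,
    fun g => ?_⟩
  show f g + f' g = _
  rw [hP, hP', map_add, _root_.map_mul, _root_.map_mul, ev_detP_pow, ev_detP_pow, prod_inv_pow_add]
  have hA := prod_det_inv_mul g d'
  have hB := prod_det_inv_mul g d
  set X := ∏ a, (((g a : Matrix (Fin N) (Fin N) k)).det)⁻¹ ^ d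
  set Y := ∏ a, (((g a : Matrix (Fin N) (Fin N) k)).det)⁻¹ ^ d'
  set DX := ∏ a, ((g a : Matrix (Fin N) (Fin N) k)).det ^ d
  set DY := ∏ a, ((g a : Matrix (Fin N) (Fin N) k)).det ^ d'
  linear_combination (-(ev g P * X)) * hA - (ev g P' * Y) * hB

lemma reg_mul {ι : Type} [Fintype ι] {f f' : (ι → GLn N k) → k}
    (hf : IsRegularFun f) (hf' : IsRegularFun f') :
    IsRegularFun (fun g => f g * f' g) := by
  obtain ⟨d, P, hP⟩ := hf
  obtain ⟨d', P', hP'⟩ := hf'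
  refine ⟨d + d', P * P', fun g => ?_⟩
  show f g * f' g = _
  rw [hP, hP', _root_.map_mul, prod_inv_pow_add]
  ring

end ExcursionAux
namespace ExcursionAux

open MvPolynomial Matrix

variable {k : Type} [Field k] {N : ℕ}

lemma reg_sum {ι : Type} [Fintype ι] {α : Type} (s : Finset α)
    (F : α → (ι → GLn N k) → k) (hF : ∀ a ∈ s, IsRegularFun (F a)) :
    IsRegularFun (fun g => ∑ a ∈ s, F a g) := by
  classical
  induction s using Finset.induction_on with
  | empty => simpa using reg_const (ι := ι) (0 : k)
  | insert a s hnot ih =>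
    have : IsRegularFun (fun g => F a g + ∑ b ∈ s, F b g) :=
      reg_add (hF a (s.mem_insert_self a)) (ih fun b hb => hF b (Finset.mem_insert_of_mem hb))
    simpa [Finset.sum_insert hnot] using this

lemma reg_pow {ι : Type} [Fintype ι] {f : (ι → GLn N k) → k}
    (hf : IsRegularFun f) (e : ℕ) : IsRegularFun (fun g => f g ^ e) := by
  induction e with
  | zero => simpa using reg_const (ι := ι) (1 : k)
  | succ e ih =>
    have := reg_mul ih hf
    simpa [pow_succ] using this

lemma reg_prod {ι : Type} [Fintype ι] {α : Type} (s : Finset α)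
    (F : α → (ι → GLn N k) → k) (hF : ∀ a ∈ s, IsRegularFun (F a)) :
    IsRegularFun (fun g => ∏ a ∈ s, F a g) := by
  classical
  induction s using Finset.induction_on with
  | empty => simpa using reg_const (ι := ι) (1 : k)
  | insert a s hnot ih =>
    have : IsRegularFun (fun g => F a g * ∏ b ∈ s, F b g) :=
      reg_mul (hF a (s.mem_insert_self a)) (ih fun b hb => hF b (Finset.mem_insert_of_mem hb))
    simpa [Finset.prod_insert hnot] using this

/-- A `GL_N`-valued map on tuples all of whose matrix entries, as well as the inverse of
whose determinant, are regular functions. -/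
def RegWord {ι : Type} [Fintype ι] (w : (ι → GLn N k) → GLn N k) : Prop :=
  (∀ a b : Fin N, IsRegularFun (fun g : ι → GLn N k =>
      ((w g : Matrix (Fin N) (Fin N) k)) a b)) ∧
    IsRegularFun (fun g : ι → GLn N k => (((w g : Matrix (Fin N) (Fin N) k)).det)⁻¹)

lemma regWord_coord {ι : Type} [Fintype ι] (a : ι) :
    RegWord (fun g : ι → GLn N k => g a) := by
  classical
  constructor
  · intro i j
    refine ⟨0, MvPolynomial.X (a, i, j), fun g => ?_⟩
    simp
  · refine ⟨1, ∏ b ∈ Finset.univ.erase a, detP ι N k b, fun g => ?_⟩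
    rw [map_prod]
    simp_rw [detP_eval, pow_one]
    rw [← Finset.mul_prod_erase Finset.univ
      (fun b => (((g b : Matrix (Fin N) (Fin N) k)).det)⁻¹) (Finset.mem_univ a)]
    rw [← mul_assoc]
    nth_rewrite 2 [mul_comm]
    rw [mul_assoc, ← Finset.prod_mul_distrib]
    rw [Finset.prod_congr rfl (fun b _ => mul_inv_cancel₀ (det_ne_zero (g := g b)))]
    simp

lemma regWord_inv_coord {ι : Type} [Fintype ι] (a : ι) :
    RegWord (fun g : ι → GLn N k => (g a)⁻¹) := by
  classical
  have hcoe : ∀ g : ι → GLn N k, ((((g a)⁻¹ : GLn N k)) : Matrix (Fin N) (Fin N) k)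
      = ((g a : Matrix (Fin N) (Fin N) k))⁻¹ := fun g => by
    simp [Matrix.coe_units_inv]
  constructor
  · intro i j
    refine ⟨1, ((Matrix.of fun i' j' : Fin N => MvPolynomial.X
        ((a, i', j') : ι × Fin N × Fin N)).adjugate i j) *
        ∏ b ∈ Finset.univ.erase a, detP ι N k b, fun g => ?_⟩
    show ((((g a)⁻¹ : GLn N k)) : Matrix (Fin N) (Fin N) k) i j = _
    rw [hcoe, Matrix.inv_def, _root_.map_mul, map_prod]
    simp_rw [detP_eval, pow_one]
    have hadj : (ev g) ((Matrix.of fun i' j' : Fin N => MvPolynomial.X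
        ((a, i', j') : ι × Fin N × Fin N)).adjugate i j)
        = ((g a : Matrix (Fin N) (Fin N) k)).adjugate i j := by
      have := (ev g).map_adjugate (Matrix.of fun i' j' : Fin N => MvPolynomial.X
        ((a, i', j') : ι × Fin N × Fin N))
      have h2 : (ev g).mapMatrix (Matrix.of fun i' j' : Fin N => MvPolynomial.X
          ((a, i', j') : ι × Fin N × Fin N)) = (g a : Matrix (Fin N) (Fin N) k) := by
        ext i' j'
        simp
      calc (ev g) ((Matrix.of fun i' j' : Fin N => MvPolynomial.X
            ((a, i', j') : ι × Fin N × Fin N)).adjugate i j)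
          = ((ev g).mapMatrix ((Matrix.of fun i' j' : Fin N => MvPolynomial.X
            ((a, i', j') : ι × Fin N × Fin N)).adjugate)) i j := rfl
        _ = _ := by rw [this, h2]
    rw [hadj]
    rw [← Finset.mul_prod_erase Finset.univ
      (fun b => (((g b : Matrix (Fin N) (Fin N) k)).det)⁻¹) (Finset.mem_univ a)]
    rw [Ring.inverse_eq_inv', Matrix.smul_apply, smul_eq_mul]
    have hc : (∏ b ∈ Finset.univ.erase a, ((g b : Matrix (Fin N) (Fin N) k)).det) *
        ∏ b ∈ Finset.univ.erase a, (((g b : Matrix (Fin N) (Fin N) k)).det)⁻¹ = 1 := by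
      rw [← Finset.prod_mul_distrib]
      exact Finset.prod_eq_one fun b _ => mul_inv_cancel₀ (det_ne_zero (g := g b))
    linear_combination (-(((g a : Matrix (Fin N) (Fin N) k)).adjugate i j) *
      (((g a : Matrix (Fin N) (Fin N) k)).det)⁻¹) * hc
  · refine ⟨0, detP ι N k a, fun g => ?_⟩
    show ((((((g a)⁻¹ : GLn N k)) : Matrix (Fin N) (Fin N) k)).det)⁻¹ = _
    rw [detP_eval, hcoe, Matrix.det_nonsing_inv, Ring.inverse_eq_inv']
    simp

lemma regWord_mul {ι : Type} [Fintype ι] {w w' : (ι → GLn N k) → GLn N k}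
    (hw : RegWord w) (hw' : RegWord w') : RegWord (fun g => w g * w' g) := by
  constructor
  · intro a b
    have : ∀ g : ι → GLn N k, ((w g * w' g : GLn N k) : Matrix (Fin N) (Fin N) k) a b
        = ∑ c, ((w g : Matrix (Fin N) (Fin N) k)) a c *
            ((w' g : Matrix (Fin N) (Fin N) k)) c b := by
      intro g
      rw [Units.val_mul, Matrix.mul_apply]
    have hreg := reg_sum (ι := ι) Finset.univ
      (fun c g => ((w g : Matrix (Fin N) (Fin N) k)) a c *
        ((w' g : Matrix (Fin N) (Fin N) k)) c b)
      (fun c _ => reg_mul (hw.1 a c) (hw'.1 c b))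
    have heq : (fun g : ι → GLn N k =>
        ((w g * w' g : GLn N k) : Matrix (Fin N) (Fin N) k) a b) = fun g =>
        ∑ c, ((w g : Matrix (Fin N) (Fin N) k)) a c *
            ((w' g : Matrix (Fin N) (Fin N) k)) c b := funext this
    rw [heq]
    exact hreg
  · have : ∀ g : ι → GLn N k,
        ((((w g * w' g : GLn N k) : Matrix (Fin N) (Fin N) k)).det)⁻¹
        = (((w g : Matrix (Fin N) (Fin N) k)).det)⁻¹ *
          (((w' g : Matrix (Fin N) (Fin N) k)).det)⁻¹ := by
      intro g
      rw [Units.val_mul, Matrix.det_mul, mul_inv]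
    rw [funext this]
    exact reg_mul hw.2 hw'.2

end ExcursionAux
namespace ExcursionAux

open MvPolynomial Matrix

variable {k : Type} [Field k] {N : ℕ}

lemma reg_comp {ι κ : Type} [Fintype ι] [Fintype κ] {f : (ι → GLn N k) → k}
    (hf : IsRegularFun f) (w : ι → (κ → GLn N k) → GLn N k)
    (hw : ∀ i, RegWord (w i)) :
    IsRegularFun (fun g : κ → GLn N k => f (fun i => w i g)) := by
  classical
  obtain ⟨d, P, hP⟩ := hf
  have hpoly : ∀ Q : MvPolynomial (ι × Fin N × Fin N) k,
      IsRegularFun (fun g : κ → GLn N k => MvPolynomial.eval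
        (fun v : ι × Fin N × Fin N =>
          ((w v.1 g : Matrix (Fin N) (Fin N) k)) v.2.1 v.2.2) Q) := by
    intro Q
    induction Q using MvPolynomial.induction_on with
    | C c => simpa using reg_const (ι := κ) c
    | add p q hp hq => simpa using reg_add hp hq
    | mul_X p v hp =>
      have := reg_mul hp ((hw v.1).1 v.2.1 v.2.2)
      simpa using this
  have hdet : IsRegularFun (fun g : κ → GLn N k =>
      ∏ i, (((w i g : Matrix (Fin N) (Fin N) k)).det)⁻¹ ^ d) :=
    reg_prod Finset.univ _ (fun i _ => reg_pow (hw i).2 d)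
  have := reg_mul (hpoly P) hdet
  have heq : (fun g : κ → GLn N k => f (fun i => w i g)) = fun g =>
      (MvPolynomial.eval (fun v : ι × Fin N × Fin N =>
        ((w v.1 g : Matrix (Fin N) (Fin N) k)) v.2.1 v.2.2) P) *
      ∏ i, (((w i g : Matrix (Fin N) (Fin N) k)).det)⁻¹ ^ d := by
    funext g
    exact hP (fun i => w i g)
  rw [heq]
  exact this

/-- Regularity of `θ_n f`. -/
lemma reg_theta {n : ℕ} {f : (Fin n → GLn N k) → k} (hf : IsRegularFun f) :
    IsRegularFun (thetaArg n f) := by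
  have := reg_comp hf (fun i : Fin n => fun g : Fin (n + 1) → GLn N k =>
      g i.succ * (g 0)⁻¹)
    (fun i => regWord_mul (regWord_coord i.succ) (regWord_inv_coord 0))
  exact this

/-- `θ_n f ∈ O(Ĝ\Ĝ^{n+1}/Ĝ)` for `f ∈ O((Ĝ^n)//Ĝ)`. -/
lemma biInv_theta {n : ℕ} (G : Subgroup (GLn N k)) {f : (Fin n → GLn N k) → k}
    (hf : ConjRegOn G f) : BiInvRegOn G (thetaArg n f) := by
  refine ⟨reg_theta hf.1, ?_⟩
  intro h hh h' hh' g hg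
  have harg : (fun i : Fin n => (h * g i.succ * h') * ((h * g 0 * h'))⁻¹)
      = fun i => h * (g i.succ * (g 0)⁻¹) * h⁻¹ := by
    funext i
    group
  show f (fun i : Fin n => (h * g i.succ * h') * ((fun i => h * g i * h') 0)⁻¹) = _
  rw [show (fun i : Fin n => (h * g i.succ * h') * ((fun i => h * g i * h') 0)⁻¹)
      = fun i => h * (g i.succ * (g 0)⁻¹) * h⁻¹ from harg]
  exact hf.2 h hh (fun i => g i.succ * (g 0)⁻¹)
    (fun i => G.mul_mem (hg i.succ) (G.inv_mem (hg 0)))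

/-- `O(Ĝ\Ĝ^I/Ĝ)` membership for the tripled function of axiom (iii). -/
lemma biInv_tilde {I : Type} [Fintype I] (G : Subgroup (GLn N k))
    {F : (I → GLn N k) → k} (hF : BiInvRegOn G F) :
    BiInvRegOn G (fun x : I ⊕ I ⊕ I → GLn N k => F (fun i =>
      x (Sum.inl i) * (x (Sum.inr (Sum.inl i)))⁻¹ * x (Sum.inr (Sum.inr i)))) := by
  constructor
  · exact reg_comp hF.1 (fun i => fun x => x (Sum.inl i) *
      (x (Sum.inr (Sum.inl i)))⁻¹ * x (Sum.inr (Sum.inr i)))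
      (fun i => regWord_mul (regWord_mul (regWord_coord _) (regWord_inv_coord _))
        (regWord_coord _))
  · intro h hh h' hh' x hx
    have harg : (fun i : I => (h * x (Sum.inl i) * h') * ((h * x (Sum.inr (Sum.inl i)) * h'))⁻¹
        * (h * x (Sum.inr (Sum.inr i)) * h'))
        = fun i => h * (x (Sum.inl i) * (x (Sum.inr (Sum.inl i)))⁻¹ *
            x (Sum.inr (Sum.inr i))) * h' := by
      funext i
      group
    show F (fun i : I => ((fun s => h * x s * h') (Sum.inl i)) *
        (((fun s => h * x s * h') (Sum.inr (Sum.inl i))))⁻¹ *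
        ((fun s => h * x s * h') (Sum.inr (Sum.inr i)))) = _
    rw [show (fun i : I => ((fun s => h * x s * h') (Sum.inl i)) *
        (((fun s => h * x s * h') (Sum.inr (Sum.inl i))))⁻¹ *
        ((fun s => h * x s * h') (Sum.inr (Sum.inr i))))
        = fun i => h * (x (Sum.inl i) * (x (Sum.inr (Sum.inl i)))⁻¹ *
            x (Sum.inr (Sum.inr i))) * h' from harg]
    exact hF.2 h hh h' hh' _ (fun i => G.mul_mem (G.mul_mem (hx _) (G.inv_mem (hx _))) (hx _))

end ExcursionAux

/-- **Formal consequences of the excursion-operator axioms**: given operators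
`S_{I,f,(γ_i)} ∈ B` satisfying (i) the algebra-homomorphism property in `f`, (ii)
compatibility with maps of index sets `ζ : I → J`, and (iii) the composition-of-loops
property, every character `ν : B → k` yields a compatible family
`Θ_n^ν : O((Ĝ^n)//Ĝ) → C(Γ^n, k)`, `f ↦ ((γ_i) ↦ ν(S_{{0,…,n}, f∘β⁻¹, (1,γ_1,…,γ_n)}))`,
of `k`-points of the GIT quotients `(Ĝ^n)//Ĝ`, functorial under maps `{1,…,m} → {1,…,n}`
and compatible with the multiplication maps `(g_1,…,g_{n+1}) ↦ (g_1,…,g_n g_{n+1})`. -/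
theorem excursion_characters_give_compatible_git_points
    {k : Type} [Field k] {N : ℕ} {Γ : Type} [Group Γ]
    (G : Subgroup (GLn N k)) (hGalg : IsAlgSubgroup G)
    (B : Type) [CommRing B] [Algebra k B]
    (S : ∀ (I : Type) [Fintype I], ((I → GLn N k) → k) → (I → Γ) → B)
    -- (i) algebra-homomorphism property in `f`
    (hadd : ∀ (I : Type) [Fintype I], ∀ f f' : (I → GLn N k) → k, BiInvRegOn G f →
      BiInvRegOn G f' → ∀ γ : I → Γ, S I (f + f') γ = S I f γ + S I f' γ)
    (hmul : ∀ (I : Type) [Fintype I], ∀ f f' : (I → GLn N k) → k, BiInvRegOn G f →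
      BiInvRegOn G f' → ∀ γ : I → Γ, S I (f * f') γ = S I f γ * S I f' γ)
    (hconst : ∀ (I : Type) [Fintype I], ∀ (c : k) (γ : I → Γ),
      S I (fun _ => c) γ = algebraMap k B c)
    -- (ii) compatibility with maps of index sets
    (hfunct : ∀ (I J : Type) [Fintype I] [Fintype J] (ζ : I → J)
      (f : (I → GLn N k) → k), BiInvRegOn G f → ∀ γ : J → Γ,
        S J (fun g => f (fun i => g (ζ i))) γ = S I f (fun i => γ (ζ i)))
    -- (iii) the composition property on `I ∪ I ∪ I`
    (htriple : ∀ (I : Type) [Fintype I] (f : (I → GLn N k) → k), BiInvRegOn G f →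
      ∀ γ γ' γ'' : I → Γ,
        S (I ⊕ I ⊕ I)
          (fun g => f (fun i =>
            g (Sum.inl i) * (g (Sum.inr (Sum.inl i)))⁻¹ * g (Sum.inr (Sum.inr i))))
          (Sum.elim γ (Sum.elim γ' γ''))
          = S I f (fun i => γ i * (γ' i)⁻¹ * γ'' i))
    -- a character of the algebra `B`
    (ν : B →ₐ[k] k) :
    -- each `Θ_n^ν` is a `k`-point of `(Ĝ^n)//Ĝ`, i.e. a character of the invariant ring
    (∀ (n : ℕ) (f f' : (Fin n → GLn N k) → k), ConjRegOn G f → ConjRegOn G f' →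
      ∀ γ : Fin n → Γ,
        ν (S (Fin (n + 1)) (thetaArg n (f * f')) (Fin.cons 1 γ)) =
          ν (S (Fin (n + 1)) (thetaArg n f) (Fin.cons 1 γ)) *
            ν (S (Fin (n + 1)) (thetaArg n f') (Fin.cons 1 γ))) ∧
    (∀ (n : ℕ) (f f' : (Fin n → GLn N k) → k), ConjRegOn G f → ConjRegOn G f' →
      ∀ γ : Fin n → Γ,
        ν (S (Fin (n + 1)) (thetaArg n (f + f')) (Fin.cons 1 γ)) =
          ν (S (Fin (n + 1)) (thetaArg n f) (Fin.cons 1 γ)) +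
            ν (S (Fin (n + 1)) (thetaArg n f') (Fin.cons 1 γ))) ∧
    (∀ (n : ℕ) (c : k) (γ : Fin n → Γ),
      ν (S (Fin (n + 1)) (thetaArg n (fun _ => c)) (Fin.cons 1 γ)) = c) ∧
    -- functoriality under all maps `{1,…,m} → {1,…,n}`
    (∀ (m n : ℕ) (ζ : Fin m → Fin n) (f : (Fin m → GLn N k) → k), ConjRegOn G f →
      ∀ γ : Fin n → Γ,
        ν (S (Fin (n + 1)) (thetaArg n (fun g => f (fun i => g (ζ i)))) (Fin.cons 1 γ)) =
          ν (S (Fin (m + 1)) (thetaArg m f) (Fin.cons 1 (fun i => γ (ζ i))))) ∧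
    -- compatibility with the multiplication maps `(g_1,…,g_{n+1}) ↦ (g_1,…,g_n g_{n+1})`
    (∀ (n : ℕ) (f : (Fin n → GLn N k) → k), ConjRegOn G f → ∀ γ : Fin (n + 1) → Γ,
      ν (S (Fin (n + 2)) (thetaArg (n + 1) (fun g => f (mulLast g))) (Fin.cons 1 γ)) =
        ν (S (Fin (n + 1)) (thetaArg n f) (Fin.cons 1 (mulLast γ)))) := by
  classical
  refine ⟨?_, ?_, ?_, ?_, ?_⟩
  · -- multiplicativity
    intro n f f' hf hf' γ
    have h1 : thetaArg n (f * f') = thetaArg n f * thetaArg n f' := rfl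
    rw [h1, hmul _ _ _ (ExcursionAux.biInv_theta G hf) (ExcursionAux.biInv_theta G hf'),
      _root_.map_mul]
  · -- additivity
    intro n f f' hf hf' γ
    have h1 : thetaArg n (f + f') = thetaArg n f + thetaArg n f' := rfl
    rw [h1, hadd _ _ _ (ExcursionAux.biInv_theta G hf) (ExcursionAux.biInv_theta G hf'),
      _root_.map_add]
  · -- constants
    intro n c γ
    have h1 : thetaArg n (fun _ => c) = (fun _ => c : (Fin (n + 1) → GLn N k) → k) := rfl
    rw [h1, hconst]
    simpa using ν.commutes c
  · -- functoriality
    intro m n ζ f hf γ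
    have hbi := ExcursionAux.biInv_theta (N := N) G hf
    set ζ' : Fin (m + 1) → Fin (n + 1) := Fin.cons 0 (fun i => (ζ i).succ) with hζ'
    have hfun : thetaArg n (fun g => f (fun i => g (ζ i)))
        = fun g : Fin (n + 1) → GLn N k => thetaArg m f (fun i => g (ζ' i)) := by
      funext g
      show f _ = f _
      refine congrArg f (funext fun i => ?_)
      simp [hζ', Fin.cons_succ, Fin.cons_zero]
    have step := hfunct (Fin (m + 1)) (Fin (n + 1)) ζ' (thetaArg m f) hbi (Fin.cons 1 γ)
    have htuple : (fun i : Fin (m + 1) => (Fin.cons (1 : Γ) γ : Fin (n + 1) → Γ) (ζ' i))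
        = (Fin.cons (1 : Γ) (fun i => γ (ζ i)) : Fin (m + 1) → Γ) := by
      funext j
      induction j using Fin.cases with
      | zero => simp [hζ']
      | succ i => simp [hζ']
    rw [hfun, step, htuple]
  · -- multiplication maps
    intro n f hf γ
    have hbi := ExcursionAux.biInv_theta (N := N) G hf
    set c : Fin (n + 1) → Fin (n + 2) :=
      fun j => if 0 < (j : ℕ) ∧ (j : ℕ) = n then Fin.last (n + 1) else 0 with hc
    set ζ : (Fin (n + 1) ⊕ Fin (n + 1) ⊕ Fin (n + 1)) → Fin (n + 2) :=
      Sum.elim Fin.castSucc (Sum.elim (fun _ => 0) c) with hζ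
    have hc0 : c 0 = 0 := by simp [hc]
    have step1 : thetaArg (n + 1) (fun g => f (mulLast g))
        = fun g : Fin (n + 2) → GLn N k => thetaArg n f (fun i =>
            g (ζ (Sum.inl i)) * (g (ζ (Sum.inr (Sum.inl i))))⁻¹ * g (ζ (Sum.inr (Sum.inr i)))) := by
      funext g
      show f _ = f _
      congr 1
      funext i
      show mulLast (fun j : Fin (n + 1) => g j.succ * (g 0)⁻¹) i
          = (g (ζ (Sum.inl i.succ)) * (g (ζ (Sum.inr (Sum.inl i.succ))))⁻¹ *
              g (ζ (Sum.inr (Sum.inr i.succ)))) *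
            (g (ζ (Sum.inl (0 : Fin (n + 1)))) * (g (ζ (Sum.inr (Sum.inl (0 : Fin (n + 1))))))⁻¹ *
              g (ζ (Sum.inr (Sum.inr (0 : Fin (n + 1))))))⁻¹
      have h0 : g (ζ (Sum.inl (0 : Fin (n + 1)))) * (g (ζ (Sum.inr (Sum.inl (0 : Fin (n + 1))))))⁻¹ *
          g (ζ (Sum.inr (Sum.inr (0 : Fin (n + 1))))) = g 0 := by
        simp [hζ, hc0]
      rw [h0]
      by_cases hi : (i : ℕ) + 1 < n
      · have hne : ¬(0 < (i.succ : ℕ) ∧ (i.succ : ℕ) = n) := by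
          simp only [Fin.val_succ]; omega
        have hcs : c i.succ = 0 := by rw [hc]; exact if_neg hne
        simp only [mulLast, if_pos hi]
        simp only [hζ, Sum.elim_inl, Sum.elim_inr, hcs]
        rw [Fin.succ_castSucc]
        group
      · have hn : (i : ℕ) + 1 = n := by have := i.isLt; omega
        have hpos : 0 < (i.succ : ℕ) ∧ (i.succ : ℕ) = n := by
          simp only [Fin.val_succ]; omega
        have hcs : c i.succ = Fin.last (n + 1) := by rw [hc]; exact if_pos hpos
        simp only [mulLast, if_neg hi]
        simp only [hζ, Sum.elim_inl, Sum.elim_inr, hcs]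
        rw [Fin.succ_castSucc, ← Fin.succ_last]
        group
    have step2 := hfunct (Fin (n + 1) ⊕ Fin (n + 1) ⊕ Fin (n + 1)) (Fin (n + 2)) ζ
      (fun x => thetaArg n f (fun i =>
        x (Sum.inl i) * (x (Sum.inr (Sum.inl i)))⁻¹ * x (Sum.inr (Sum.inr i))))
      (ExcursionAux.biInv_tilde G hbi) (Fin.cons 1 γ)
    have hδζ : (fun s : Fin (n + 1) ⊕ Fin (n + 1) ⊕ Fin (n + 1) => (Fin.cons 1 γ : Fin (n + 2) → Γ) (ζ s))
        = Sum.elim (fun j : Fin (n + 1) => (Fin.cons 1 γ : Fin (n + 2) → Γ) j.castSucc)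
            (Sum.elim (fun _ : Fin (n + 1) => (1 : Γ))
              (fun j : Fin (n + 1) => (Fin.cons 1 γ : Fin (n + 2) → Γ) (c j))) := by
      funext s
      rcases s with j | j | j <;> simp [hζ]
    have step3 := htriple (Fin (n + 1)) (thetaArg n f) hbi
      (fun j => (Fin.cons 1 γ : Fin (n + 2) → Γ) j.castSucc) (fun _ => (1 : Γ)) (fun j => (Fin.cons 1 γ : Fin (n + 2) → Γ) (c j))
    have hfinal : (fun j : Fin (n + 1) =>
        (Fin.cons 1 γ : Fin (n + 2) → Γ) j.castSucc * ((1 : Γ))⁻¹ * (Fin.cons 1 γ : Fin (n + 2) → Γ) (c j))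
        = Fin.cons 1 (mulLast γ) := by
      funext j
      induction j using Fin.cases with
      | zero => simp [hc0]
      | succ i =>
        rw [← Fin.succ_castSucc]
        by_cases hi : (i : ℕ) + 1 < n
        · have hne : ¬(0 < (i.succ : ℕ) ∧ (i.succ : ℕ) = n) := by
            simp only [Fin.val_succ]; omega
          have hcs : c i.succ = 0 := by rw [hc]; exact if_neg hne
          simp [hcs, mulLast, hi]
        · have hn : (i : ℕ) + 1 = n := by have := i.isLt; omega
          have hpos : 0 < (i.succ : ℕ) ∧ (i.succ : ℕ) = n := by
            simp only [Fin.val_succ]; omega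
          have hcs : c i.succ = Fin.last (n + 1) := by rw [hc]; exact if_pos hpos
          rw [hcs, ← Fin.succ_last]
          simp [mulLast, hi]
    calc ν (S (Fin (n + 2)) (thetaArg (n + 1) (fun g => f (mulLast g))) (Fin.cons 1 γ))
        = ν (S (Fin (n + 2)) (fun g : Fin (n + 2) → GLn N k => thetaArg n f (fun i =>
            g (ζ (Sum.inl i)) * (g (ζ (Sum.inr (Sum.inl i))))⁻¹ *
              g (ζ (Sum.inr (Sum.inr i))))) (Fin.cons 1 γ)) := by rw [step1]
      _ = ν (S (Fin (n + 1) ⊕ Fin (n + 1) ⊕ Fin (n + 1))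
            (fun x => thetaArg n f (fun i =>
              x (Sum.inl i) * (x (Sum.inr (Sum.inl i)))⁻¹ * x (Sum.inr (Sum.inr i))))
            (fun s : Fin (n + 1) ⊕ Fin (n + 1) ⊕ Fin (n + 1) =>
              (Fin.cons 1 γ : Fin (n + 2) → Γ) (ζ s))) := congrArg ν step2
      _ = ν (S (Fin (n + 1)) (thetaArg n f) (fun j : Fin (n + 1) =>
            (Fin.cons 1 γ : Fin (n + 2) → Γ) j.castSucc * ((1 : Γ))⁻¹ * (Fin.cons 1 γ : Fin (n + 2) → Γ) (c j))) := by
            rw [hδζ]; exact congrArg ν step3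
      _ = ν (S (Fin (n + 1)) (thetaArg n f) (Fin.cons 1 (mulLast γ))) := by rw [hfinal]
end

section
/- Let Ĝ be a reductive algebraic group over an algebraically closed field E of characteristic zero and I a finite set. Every regular function f on the double quotient Ĝ\(Ĝ^I)/Ĝ (GIT quotient by left and right diagonal translation) is of the form f((g_i)_{i∈I}) = ⟨ξ, (g_i)_{i∈I} · x⟩ for some finite-dimensional representation W of Ĝ^I and vectors x ∈ W, ξ ∈ W* both invariant under the diagonal Ĝ-action. -/
open scoped BigOperators

variable {k : Type} [Field k] {N : ℕ}

namespace MCAux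

open MvPolynomial

variable {k : Type} [Field k] {N : ℕ} {I : Type} [Fintype I]

lemma totalDegree_aeval_le {σ τ : Type*} (f : σ → MvPolynomial τ k)
    (hf : ∀ i, (f i).totalDegree ≤ 1) (p : MvPolynomial σ k) :
    (MvPolynomial.aeval f p).totalDegree ≤ p.totalDegree := by
  conv_lhs => rw [p.as_sum]
  rw [map_sum]
  apply MvPolynomial.totalDegree_finsetSum_le
  intro v hv
  rw [MvPolynomial.aeval_monomial]
  refine (MvPolynomial.totalDegree_mul _ _).trans ?_
  have h1 : (algebraMap k (MvPolynomial τ k) (coeff v p)).totalDegree = 0 := by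
    rw [MvPolynomial.algebraMap_eq, totalDegree_C]
  rw [h1, zero_add]
  refine le_trans ?_ (MvPolynomial.le_totalDegree hv)
  rw [Finsupp.prod]
  refine (MvPolynomial.totalDegree_finset_prod _ _).trans ?_
  rw [Finsupp.sum]
  apply Finset.sum_le_sum
  intro i _
  exact (MvPolynomial.totalDegree_pow _ _).trans
    (by simpa using Nat.mul_le_mul_left (v i) (hf i))

/-- Entry evaluation point associated to a tuple of invertible matrices. -/
def ent (g : I → GLn N k) : I × Fin N × Fin N → k :=
  fun v => ((g v.1 : Matrix (Fin N) (Fin N) k)) v.2.1 v.2.2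

/-- The product of the determinants. -/
def dprod (g : I → GLn N k) : k := ∏ i, ((g i : Matrix (Fin N) (Fin N) k)).det

lemma det_ne_zero (g : GLn N k) : ((g : Matrix (Fin N) (Fin N) k)).det ≠ 0 :=
  ((Matrix.isUnit_iff_isUnit_det (g : Matrix (Fin N) (Fin N) k)).mp g.isUnit).ne_zero

lemma dprod_ne_zero (g : I → GLn N k) : dprod g ≠ 0 :=
  Finset.prod_ne_zero_iff.mpr fun i _ => det_ne_zero (g i)

/-- Regular functions in canonical form with a single inverse determinant product. -/
lemma isRegularFun_iff (f : (I → GLn N k) → k) :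
    IsRegularFun f ↔ ∃ (d : ℕ) (P : MvPolynomial (I × Fin N × Fin N) k), ∀ g : I → GLn N k,
      f g = MvPolynomial.eval (ent g) P * ((dprod g)⁻¹) ^ d := by
  have key : ∀ (d : ℕ) (g : I → GLn N k),
      (∏ i, (((g i : Matrix (Fin N) (Fin N) k)).det)⁻¹ ^ d) = ((dprod g)⁻¹) ^ d := by
    intro d g
    rw [Finset.prod_pow, dprod, ← Finset.prod_inv_distrib]
  constructor
  · rintro ⟨d, P, hP⟩
    exact ⟨d, P, fun g => by rw [hP g, key d g]; rfl⟩
  · rintro ⟨d, P, hP⟩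
    refine ⟨d, P, fun g => by rw [hP g, ← key d g]; rfl⟩

/-- The product of the determinant polynomials. -/
noncomputable def detProd (k : Type) [Field k] (N : ℕ) (I : Type) [Fintype I] :
    MvPolynomial (I × Fin N × Fin N) k :=
  ∏ i, (Matrix.of fun a b => (X (i, a, b) : MvPolynomial (I × Fin N × Fin N) k)).det

lemma eval_detProd (g : I → GLn N k) :
    MvPolynomial.eval (ent g) (detProd k N I) = dprod g := by
  rw [detProd, map_prod, dprod]
  refine Finset.prod_congr rfl fun i _ => ?_
  rw [RingHom.map_det]
  congr 1
  ext a b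
  simp [ent]

/-- Regular functions form a submodule of the space of all functions. -/
noncomputable def regularSub (k : Type) [Field k] (N : ℕ) (I : Type) [Fintype I] :
    Submodule k ((I → GLn N k) → k) where
  carrier := {f | IsRegularFun f}
  zero_mem' := by
    refine (isRegularFun_iff _).mpr ⟨0, 0, fun g => by simp⟩
  add_mem' := by
    intro f1 f2 h1 h2
    replace h1 : IsRegularFun f1 := h1
    replace h2 : IsRegularFun f2 := h2
    show IsRegularFun (f1 + f2)
    rw [isRegularFun_iff] at h1 h2 ⊢
    obtain ⟨d1, P1, hP1⟩ := h1
    obtain ⟨d2, P2, hP2⟩ := h2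
    refine ⟨d1 + d2, P1 * (detProd k N I) ^ d2 + P2 * (detProd k N I) ^ d1, fun g => ?_⟩
    have hD := dprod_ne_zero g
    simp only [Pi.add_apply, hP1 g, hP2 g, map_add, map_mul, map_pow, eval_detProd]
    have key2 : ∀ e1 e2 : ℕ, dprod g ^ e1 * (dprod g)⁻¹ ^ (e1 + e2) = (dprod g)⁻¹ ^ e2 := by
      intro e1 e2
      rw [pow_add, ← mul_assoc, ← mul_pow, mul_inv_cancel₀ hD, one_pow, one_mul]
    have t1 : dprod g ^ d2 * (dprod g)⁻¹ ^ (d1 + d2) = (dprod g)⁻¹ ^ d1 := by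
      rw [add_comm]; exact key2 d2 d1
    have t2 : dprod g ^ d1 * (dprod g)⁻¹ ^ (d1 + d2) = (dprod g)⁻¹ ^ d2 := key2 d1 d2
    rw [add_mul, mul_assoc, mul_assoc, t1, t2]
  smul_mem' := by
    intro c f hf
    replace hf : IsRegularFun f := hf
    show IsRegularFun (c • f)
    rw [isRegularFun_iff] at hf ⊢
    obtain ⟨d, P, hP⟩ := hf
    exact ⟨d, C c * P, fun g => by simp [hP g]; ring⟩

/-- Translation stability of regular functions. -/
lemma isRegularFun_translate {f : (I → GLn N k) → k} (hf : IsRegularFun f)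
    (p q : I → GLn N k) :
    IsRegularFun (fun g => f (fun i => p i * g i * q i)) := by
  rw [isRegularFun_iff] at hf ⊢
  obtain ⟨d, P, hP⟩ := hf
  set subst : I × Fin N × Fin N → MvPolynomial (I × Fin N × Fin N) k :=
    fun v => ∑ c : Fin N, ∑ e : Fin N,
      C ((p v.1 : Matrix (Fin N) (Fin N) k) v.2.1 c) * X (v.1, c, e) *
        C ((q v.1 : Matrix (Fin N) (Fin N) k) e v.2.2) with hsubst
  refine ⟨d, C (((dprod p) * (dprod q))⁻¹ ^ d) * eval₂ C subst P, fun g => ?_⟩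
  have hfun : (eval (ent g) ∘ subst) = ent (fun i => p i * g i * q i) := by
    funext v
    simp only [hsubst, Function.comp_apply, map_sum, map_mul, eval_C, eval_X]
    show _ = ((p v.1 * g v.1 * q v.1 : GLn N k) : Matrix (Fin N) (Fin N) k) v.2.1 v.2.2
    simp only [Units.val_mul, Matrix.mul_apply, Finset.sum_mul]
    rw [Finset.sum_comm]
    simp [ent, mul_assoc]
  have hsub : MvPolynomial.eval (ent g) (eval₂ C subst P)
      = MvPolynomial.eval (ent (fun i => p i * g i * q i)) P := by
    rw [← MvPolynomial.eval_assoc, hfun]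
  rw [hP]
  rw [map_mul, hsub, eval_C]
  have hd : dprod (fun i => p i * g i * q i) = dprod p * dprod g * dprod q := by
    simp only [dprod, Units.val_mul, Matrix.det_mul]
    rw [Finset.prod_mul_distrib, Finset.prod_mul_distrib]
  rw [hd]
  simp only [mul_inv, mul_pow]
  ring




section Translation

variable {Γ : Type*} [Group Γ]

/-- Right translation operator on functions on a group. -/
def rTr (h : Γ) : (Γ → k) →ₗ[k] (Γ → k) where
  toFun v := fun u => v (u * h)
  map_add' _ _ := rfl
  map_smul' _ _ := rfl

@[simp] lemma rTr_apply (h : Γ) (v : Γ → k) (u : Γ) : rTr h v u = v (u * h) := rfl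

lemma rTr_rTr (h₁ h₂ : Γ) (v : Γ → k) :
    rTr (k := k) h₁ (rTr h₂ v) = rTr (h₁ * h₂) v := by
  funext u
  simp [rTr, mul_assoc]

/-- The span of the right translates of a fixed function. -/
noncomputable def Wspan (x₀ : Γ → k) : Submodule k (Γ → k) :=
  Submodule.span k (Set.range fun h : Γ => rTr h x₀)

lemma x₀_mem_Wspan (x₀ : Γ → k) : x₀ ∈ Wspan x₀ :=
  Submodule.subset_span ⟨1, by funext u; simp⟩

lemma rTr_mem_Wspan (x₀ : Γ → k) (g : Γ) {w : Γ → k} (hw : w ∈ Wspan x₀) :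
    rTr g w ∈ Wspan x₀ := by
  induction hw using Submodule.span_induction with
  | mem w hw =>
      obtain ⟨h, rfl⟩ := hw
      exact Submodule.subset_span ⟨g * h, (rTr_rTr g h x₀).symm⟩
  | zero => simpa using (Wspan x₀).zero_mem
  | add y z hy hz hy' hz' => rw [map_add]; exact (Wspan x₀).add_mem hy' hz'
  | smul a y hy hy' => rw [map_smul]; exact (Wspan x₀).smul_mem a hy'

/-- The right regular representation on the span of translates. -/
noncomputable def rhoW (x₀ : Γ → k) : Representation k Γ (Wspan x₀) where
  toFun g := (rTr (k := k) g).restrict fun w hw => rTr_mem_Wspan x₀ g hw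
  map_one' := by
    ext w
    show (w : Γ → k) (_ * 1) = (w : Γ → k) _
    rw [mul_one]
  map_mul' g₁ g₂ := by
    ext w u
    show (w : Γ → k) (u * (g₁ * g₂)) = (w : Γ → k) (u * g₁ * g₂)
    rw [mul_assoc]

lemma rhoW_apply (x₀ : Γ → k) (g : Γ) (w : Wspan x₀) (u : Γ) :
    ((rhoW x₀ g w : Wspan x₀) : Γ → k) u = (w : Γ → k) (u * g) := rfl

/-- Evaluation functionals on a submodule of functions. -/
def evalAtW (V : Submodule k (Γ → k)) (u : Γ) : Module.Dual k V where
  toFun w := (w : Γ → k) u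
  map_add' _ _ := rfl
  map_smul' _ _ := rfl

lemma span_evalAtW_eq_top (V : Submodule k (Γ → k)) [FiniteDimensional k V] :
    Submodule.span k (Set.range (evalAtW V)) = ⊤ := by
  set Φ := Submodule.span k (Set.range (evalAtW V)) with hΦ
  have hco : Φ.dualCoannihilator = ⊥ := by
    rw [Submodule.eq_bot_iff]
    intro v hv
    rw [Submodule.mem_dualCoannihilator] at hv
    have : ∀ u : Γ, (v : Γ → k) u = 0 := fun u =>
      hv (evalAtW V u) (Submodule.subset_span ⟨u, rfl⟩)
    exact Subtype.ext (funext this)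
  have h2 := Subspace.dualCoannihilator_dualAnnihilator_eq (W := Φ)
  rw [← h2, hco, Submodule.dualAnnihilator_bot]

end Translation

/-- Conjugating a representation by a linear equivalence. -/
noncomputable def conjRep {Γ : Type*} [Group Γ] {V V₂ : Type*}
    [AddCommGroup V] [Module k V] [AddCommGroup V₂] [Module k V₂]
    (ρ : Representation k Γ V) (e : V ≃ₗ[k] V₂) : Representation k Γ V₂ where
  toFun g := e.toLinearMap ∘ₗ ρ g ∘ₗ e.symm.toLinearMap
  map_one' := by
    ext w
    simp [Module.End.one_apply]
  map_mul' g₁ g₂ := by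
    ext w
    simp [Module.End.mul_apply, map_mul]

lemma conjRep_apply {Γ : Type*} [Group Γ] {V V₂ : Type*}
    [AddCommGroup V] [Module k V] [AddCommGroup V₂] [Module k V₂]
    (ρ : Representation k Γ V) (e : V ≃ₗ[k] V₂) (g : Γ) (v : V₂) :
    conjRep ρ e g v = e (ρ g (e.symm v)) := rfl

/-- Restriction of functions to a subgroup, as a linear map. -/
def resMap (Pi' : Subgroup (I → GLn N k)) : ((I → GLn N k) → k) →ₗ[k] (↥Pi' → k) where
  toFun F := fun u => F ↑u
  map_add' _ _ := rfl
  map_smul' _ _ := rfl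


open MvPolynomial in
/-- The model space of regular functions of bounded degree, mapped to functions on a
subgroup. -/
noncomputable def Lmap (Pi' : Subgroup (I → GLn N k)) (D dd : ℕ) :
    restrictTotalDegree (I × Fin N × Fin N) k D →ₗ[k] (↥Pi' → k) where
  toFun Q := fun u =>
    eval (ent (↑u : I → GLn N k)) (Q : MvPolynomial (I × Fin N × Fin N) k) *
      ((dprod (↑u : I → GLn N k))⁻¹) ^ dd
  map_add' Q1 Q2 := by
    funext u
    simp [add_mul]
  map_smul' c Q := by
    funext u
    simp [mul_assoc]

open MvPolynomial in
lemma rTr_res_mem_range_Lmap (Pi' : Subgroup (I → GLn N k)) (d : ℕ)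
    (P : MvPolynomial (I × Fin N × Fin N) k) (f : (I → GLn N k) → k)
    (hP : ∀ g : I → GLn N k, f g = eval (ent g) P * ((dprod g)⁻¹) ^ d) (h : ↥Pi') :
    rTr h (resMap Pi' f) ∈ LinearMap.range (Lmap (k := k) Pi' P.totalDegree d) := by
  classical
  set substR : I × Fin N × Fin N → MvPolynomial (I × Fin N × Fin N) k :=
    fun v => ∑ c : Fin N, X (v.1, v.2.1, c) *
      C ((((h : I → GLn N k) v.1 : Matrix (Fin N) (Fin N) k)) c v.2.2) with hsubstR
  have hdeg : (C ((dprod ((h : I → GLn N k)))⁻¹ ^ d) * aeval substR P).totalDegree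
      ≤ P.totalDegree := by
    refine (totalDegree_mul _ _).trans ?_
    rw [totalDegree_C, zero_add]
    refine totalDegree_aeval_le _ (fun v => ?_) P
    refine totalDegree_finsetSum_le (fun c _ => ?_)
    refine (totalDegree_mul _ _).trans ?_
    rw [totalDegree_C, totalDegree_X]
  refine ⟨⟨_, (mem_restrictTotalDegree _ _ _).mpr hdeg⟩, ?_⟩
  funext u
  show eval (ent (↑u : I → GLn N k)) (C _ * aeval substR P) * _ = f ↑(u * h)
  have hfun : (eval (ent (↑u : I → GLn N k)) ∘ substR) = ent (↑(u * h) : I → GLn N k) := by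
    funext v
    simp only [hsubstR, Function.comp_apply, map_sum, map_mul, eval_C, eval_X]
    show _ = (((↑(u * h) : I → GLn N k) v.1 : Matrix (Fin N) (Fin N) k)) v.2.1 v.2.2
    have : ((↑(u * h) : I → GLn N k) v.1 : Matrix (Fin N) (Fin N) k)
        = ((↑u : I → GLn N k) v.1 : Matrix (Fin N) (Fin N) k) *
          ((↑h : I → GLn N k) v.1 : Matrix (Fin N) (Fin N) k) := rfl
    rw [this, Matrix.mul_apply]
    rfl
  have hsub : eval (ent (↑u : I → GLn N k)) (aeval substR P)
      = eval (ent (↑(u * h) : I → GLn N k)) P := by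
    rw [aeval_def, MvPolynomial.algebraMap_eq, ← MvPolynomial.eval_assoc, hfun]
  rw [map_mul, eval_C, hsub]
  have hres : f ↑(u * h) = eval (ent (↑(u * h) : I → GLn N k)) P *
      ((dprod (↑(u * h) : I → GLn N k))⁻¹) ^ d := hP _
  have hd : dprod (↑(u * h) : I → GLn N k)
      = dprod (↑u : I → GLn N k) * dprod (↑h : I → GLn N k) := by
    show (∏ i, _) = _
    rw [dprod, dprod, ← Finset.prod_mul_distrib]
    refine Finset.prod_congr rfl fun i _ => ?_
    show (((↑u * ↑h : I → GLn N k) i : GLn N k) : Matrix (Fin N) (Fin N) k).det = _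
    rw [Pi.mul_apply, Units.val_mul, Matrix.det_mul]
  rw [hres, hd, mul_inv, mul_pow]
  ring


end MCAux



/-- **Matrix coefficients exhaust the bi-invariant functions**: for a reductive group `G`
over an algebraically closed field of characteristic zero and a finite set `I`, every regular
function on `G^I` invariant under left and right diagonal translation by `G` is of the form
`f((g_i)) = ⟨ξ, (g_i) · x⟩` for some finite-dimensional rational representation of `G^I` and
vectors `x`, `ξ` invariant under the diagonal `G`-action. -/
theorem biinvariant_function_is_matrix_coefficient
    {k : Type} [Field k] [IsAlgClosed k] [CharZero k] {N : ℕ} {I : Type} [Fintype I]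
    (G : Subgroup (GLn N k)) (hGalg : IsAlgSubgroup G) (hGred : IsReductive G)
    (f : (I → GLn N k) → k) (hreg : IsRegularFun f)
    (hinv : ∀ h h' : GLn N k, h ∈ G → h' ∈ G → ∀ g : I → GLn N k, (∀ i, g i ∈ G) →
      f (fun i => h * g i * h') = f g) :
    ∃ (m : ℕ)
      (ρ : Representation k ↥(Subgroup.pi Set.univ fun _ : I => G) (Fin m → k))
      (x : Fin m → k) (ξ : Module.Dual k (Fin m → k)),
      -- `ρ` is a rational (algebraic) representation: its matrix coefficients are regular
      (∀ a b : Fin m, ∃ F : (I → GLn N k) → k, IsRegularFun F ∧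
        ∀ g : ↥(Subgroup.pi Set.univ fun _ : I => G),
          F (g : I → GLn N k) = ρ g (Pi.single b 1) a) ∧
      -- `x` is invariant under the diagonal `G`-action
      (∀ g : ↥(Subgroup.pi Set.univ fun _ : I => G),
        (∃ c : GLn N k, ∀ i, (g : I → GLn N k) i = c) → ρ g x = x) ∧
      -- `ξ` is invariant under the diagonal `G`-action
      (∀ g : ↥(Subgroup.pi Set.univ fun _ : I => G),
        (∃ c : GLn N k, ∀ i, (g : I → GLn N k) i = c) → ∀ w, ξ (ρ g w) = ξ w) ∧
      -- `f` is the matrix coefficient of `(x, ξ)`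
      ∀ g : ↥(Subgroup.pi Set.univ fun _ : I => G), f (g : I → GLn N k) = ξ (ρ g x) := by
  classical
  obtain ⟨d, P, hP⟩ := (MCAux.isRegularFun_iff f).mp hreg
  set Pi' : Subgroup (I → GLn N k) := Subgroup.pi Set.univ fun _ : I => G with hPi'
  have hmemG : ∀ (u : ↥Pi') (i : I), (u : I → GLn N k) i ∈ G := fun u i =>
    u.2 i (Set.mem_univ i)
  -- right diagonal invariance
  have hdiagR : ∀ g : ↥Pi', (∃ c : GLn N k, ∀ i, (g : I → GLn N k) i = c) →
      ∀ u : ↥Pi', f ↑(u * g) = f ↑u := by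
    rintro g ⟨c, hc⟩ u
    rcases isEmpty_or_nonempty I with hI | hI
    · have hg1 : g = 1 := Subtype.ext (funext fun i => isEmptyElim i)
      rw [hg1, mul_one]
    · obtain ⟨i₀⟩ := hI
      have hcG : c ∈ G := hc i₀ ▸ hmemG g i₀
      have h2 := hinv 1 c (one_mem G) hcG (u : I → GLn N k) (hmemG u)
      rw [← h2]
      congr 1
      funext i
      show (u : I → GLn N k) i * (g : I → GLn N k) i = 1 * (u : I → GLn N k) i * c
      rw [hc i, one_mul]
  -- left diagonal invariance
  have hdiagL : ∀ g : ↥Pi', (∃ c : GLn N k, ∀ i, (g : I → GLn N k) i = c) →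
      ∀ u : ↥Pi', f ↑(g * u) = f ↑u := by
    rintro g ⟨c, hc⟩ u
    rcases isEmpty_or_nonempty I with hI | hI
    · have hg1 : g = 1 := Subtype.ext (funext fun i => isEmptyElim i)
      rw [hg1, one_mul]
    · obtain ⟨i₀⟩ := hI
      have hcG : c ∈ G := hc i₀ ▸ hmemG g i₀
      have h2 := hinv c 1 hcG (one_mem G) (u : I → GLn N k) (hmemG u)
      rw [← h2]
      congr 1
      funext i
      show (g : I → GLn N k) i * (u : I → GLn N k) i = c * (u : I → GLn N k) i * 1
      rw [hc i, mul_one]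
  set x₀ : ↥Pi' → k := MCAux.resMap Pi' f with hx₀
  -- finite dimensionality of the span of translates
  have hWle : MCAux.Wspan x₀ ≤ LinearMap.range (MCAux.Lmap (k := k) Pi' P.totalDegree d) := by
    rw [MCAux.Wspan, Submodule.span_le]
    rintro _ ⟨h, rfl⟩
    exact MCAux.rTr_res_mem_range_Lmap Pi' d P f hP h
  have hWfd : FiniteDimensional k (MCAux.Wspan x₀) :=
    Submodule.finiteDimensional_of_le hWle
  set W := MCAux.Wspan x₀ with hWdef
  set ρW := MCAux.rhoW x₀ with hρW
  set B := Module.finBasis k ↥W with hB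
  set m := Module.finrank k ↥W with hm
  set e := B.equivFun with he
  set ρ' := MCAux.conjRep ρW e with hρ'
  set xW : ↥W := ⟨x₀, MCAux.x₀_mem_Wspan x₀⟩ with hxW
  -- the value of any element of W at a diagonal point equals its value at 1
  have hval1 : ∀ v : ↥W, ∀ g : ↥Pi', (∃ c : GLn N k, ∀ i, (g : I → GLn N k) i = c) →
      ((v : ↥Pi' → k)) g = (v : ↥Pi' → k) 1 := by
    rintro ⟨v, hv⟩ g hg
    induction hv using Submodule.span_induction with
    | mem v hv =>
        obtain ⟨h, rfl⟩ := hv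
        show x₀ (g * h) = x₀ (1 * h)
        rw [one_mul]
        exact hdiagL g hg h
    | zero => rfl
    | add y z hy hz hy' hz' => exact congrArg₂ (· + ·) hy' hz'
    | smul a y hy hy' => exact congrArg (a * ·) hy'
  refine ⟨m, ρ', e xW, (MCAux.evalAtW W 1) ∘ₗ e.symm.toLinearMap, ?_, ?_, ?_, ?_⟩
  · -- matrix coefficients are regular
    intro a b
    have claimA : ∀ (w : ↥Pi' → k), w ∈ W → ∀ p : ↥Pi',
        (fun g : ↥Pi' => w (p * g)) ∈
          Submodule.map (MCAux.resMap (k := k) Pi') (MCAux.regularSub k N I) := by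
      intro w hw
      induction hw using Submodule.span_induction with
      | mem w hw =>
          intro p
          obtain ⟨h, rfl⟩ := hw
          refine ⟨fun Gm => f (fun i => (p : I → GLn N k) i * Gm i * (h : I → GLn N k) i),
            MCAux.isRegularFun_translate hreg _ _, ?_⟩
          funext g
          rfl
      | zero => intro p; exact Submodule.zero_mem _
      | add y z hy hz hy' hz' => intro p; exact Submodule.add_mem _ (hy' p) (hz' p)
      | smul a y hy hy' => intro p; exact Submodule.smul_mem _ a (hy' p)
    have hca : B.coord a ∈ Submodule.span k (Set.range (MCAux.evalAtW W)) := by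
      rw [MCAux.span_evalAtW_eq_top (k := k) W]
      trivial
    rw [Finsupp.mem_span_range_iff_exists_finsupp] at hca
    obtain ⟨cf, hcf⟩ := hca
    have hmem : (fun g : ↥Pi' => B.coord a (ρW g (B b))) ∈
        Submodule.map (MCAux.resMap (k := k) Pi') (MCAux.regularSub k N I) := by
      have heq : (fun g : ↥Pi' => B.coord a (ρW g (B b)))
          = ∑ u ∈ cf.support, cf u • fun g : ↥Pi' => ((B b : ↥W) : ↥Pi' → k) (u * g) := by
        funext g
        rw [← hcf]
        simp only [Finsupp.sum, LinearMap.coe_sum, Finset.sum_apply, LinearMap.smul_apply,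
          Pi.smul_apply, smul_eq_mul]
        rfl
      rw [heq]
      exact Submodule.sum_mem _ fun u _ => Submodule.smul_mem _ _ (claimA _ (B b).2 u)
    obtain ⟨F, hFreg, hFres⟩ := hmem
    refine ⟨F, hFreg, fun g => ?_⟩
    have h1 : F ↑g = B.coord a (ρW g (B b)) := congrFun hFres g
    have hsymm : e.symm (Pi.single b 1) = B b := by
      apply e.injective
      rw [LinearEquiv.apply_symm_apply]
      funext a'
      rw [he, Module.Basis.equivFun_apply, Module.Basis.repr_self]
      simp [Finsupp.single_apply, Pi.single_apply, eq_comm]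
    rw [h1, MCAux.conjRep_apply, hsymm, he, Module.Basis.equivFun_apply, Module.Basis.coord_apply]
  · -- x is invariant
    intro g hg
    have hfix : ρW g xW = xW := by
      apply Subtype.ext
      funext u
      show x₀ (u * g) = x₀ u
      exact hdiagR g hg u
    rw [MCAux.conjRep_apply, LinearEquiv.symm_apply_apply, hfix]
  · -- ξ is invariant
    intro g hg w
    rw [MCAux.conjRep_apply]
    show MCAux.evalAtW W 1 (e.symm (e (ρW g (e.symm w))))
      = MCAux.evalAtW W 1 (e.symm w)
    rw [LinearEquiv.symm_apply_apply]
    show ((ρW g (e.symm w) : ↥W) : ↥Pi' → k) 1 = ((e.symm w : ↥W) : ↥Pi' → k) 1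
    rw [MCAux.rhoW_apply, one_mul]
    exact hval1 (e.symm w) g hg
  · -- f is the matrix coefficient
    intro g
    rw [MCAux.conjRep_apply]
    show f ↑g = MCAux.evalAtW W 1 (e.symm (e (ρW g (e.symm (e xW)))))
    rw [LinearEquiv.symm_apply_apply, LinearEquiv.symm_apply_apply]
    show f ↑g = ((ρW g xW : ↥W) : ↥Pi' → k) 1
    rw [MCAux.rhoW_apply, one_mul]
    rfl
end
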